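/- Let α > 0 and set γ_α = 6 H_α″(-c_α)/H_α‴(-c_α). Then γ_α > 0, v_α(x)/( γ_α^{1/2} (x + c_α)^{1/2} ) → 1 as x ↓ -c_α, and lim_{x ↓ -c_α} (P_α(x) − s_α)/(x + c_α) = −(1/2) γ_α H_α″(-c_α) > 0. -/

import Mathlib

open MeasureTheory Set Filter

/-- `F(x+iy) = ∫₀^∞ t e^{-t}/((x-t)² + y²) dt`. -/
noncomputable def Fint (x y : ℝ) : ℝ :=
  ∫ t in Set.Ioi (0:ℝ), t * Real.exp (-t) / ((x - t)^2 + y^2)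

/-- `H_α(z) = z + α + α ∫₀^∞ t e^{-t}/(z-t) dt`. -/
noncomputable def Hfun (α : ℝ) (z : ℂ) : ℂ :=
  z + (α : ℂ) + (α : ℂ) * ∫ t in Set.Ioi (0:ℝ), ((t * Real.exp (-t) : ℝ) : ℂ) / (z - (t : ℂ))


lemma integ_texp : IntegrableOn (fun t : ℝ => t * Real.exp (-t)) (Ioi 0) := by
  have h := Real.GammaIntegral_convergent (s := 2) (by norm_num)
  have : (fun x : ℝ => Real.exp (-x) * x ^ ((2:ℝ) - 1)) = fun t => t * Real.exp (-t) := by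
    funext x
    rw [show ((2:ℝ) - 1) = 1 by norm_num, Real.rpow_one, mul_comm]
  rwa [this] at h

lemma integ_pow {c : ℝ} (hc : 0 < c) (n : ℕ) :
    IntegrableOn (fun t : ℝ => t * Real.exp (-t) / (c + t) ^ n) (Ioi 0) := by
  have hmeas : AEStronglyMeasurable (fun t : ℝ => t * Real.exp (-t) / (c + t) ^ n)
      (volume.restrict (Ioi 0)) := by
    apply Measurable.aestronglyMeasurable
    exact (measurable_id.mul (Real.measurable_exp.comp measurable_neg)).div
      ((measurable_const.add measurable_id).pow measurable_const)
  refine Integrable.mono' ((integ_texp).const_mul (1 / c ^ n)) hmeas ?_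
  filter_upwards [ae_restrict_mem measurableSet_Ioi] with t ht
  have ht' : (0:ℝ) < t := ht
  have hct : (0:ℝ) < c + t := by linarith
  have h1 : c ^ n ≤ (c + t) ^ n := pow_le_pow_left₀ hc.le (by linarith) n
  have h0 : 0 ≤ t * Real.exp (-t) := mul_nonneg ht'.le (Real.exp_pos _).le
  rw [Real.norm_eq_abs, abs_of_nonneg (div_nonneg h0 (pow_pos hct n).le)]
  rw [div_le_iff₀ (pow_pos hct n)]
  have key : (1:ℝ) ≤ (c + t) ^ n / c ^ n := by
    rw [le_div_iff₀ (pow_pos hc n), one_mul]; exact h1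
  calc t * Real.exp (-t) = t * Real.exp (-t) * 1 := by ring
  _ ≤ t * Real.exp (-t) * ((c + t)^n / c ^ n) := mul_le_mul_of_nonneg_left key h0
  _ = 1 / c ^ n * (t * Real.exp (-t)) * (c + t) ^ n := by ring

lemma integ_pow_pos {c : ℝ} (hc : 0 < c) (n : ℕ) :
    0 < ∫ t in Ioi (0:ℝ), t * Real.exp (-t) / (c + t) ^ n := by
  rw [setIntegral_pos_iff_support_of_nonneg_ae _ (integ_pow hc n)]
  · have hsub : Ioi (0:ℝ) ⊆ Function.support (fun t : ℝ => t * Real.exp (-t) / (c + t) ^ n) ∩ Ioi 0 := by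
      intro t ht
      refine ⟨?_, ht⟩
      have ht' : (0:ℝ) < t := ht
      have : 0 < t * Real.exp (-t) / (c + t) ^ n :=
        div_pos (mul_pos ht' (Real.exp_pos _)) (pow_pos (by linarith) n)
      exact ne_of_gt this
    calc (0:ENNReal) < volume (Ioi (0:ℝ)) := by simp [Real.volume_Ioi]
    _ ≤ _ := measure_mono hsub
  · filter_upwards [ae_restrict_mem measurableSet_Ioi] with t ht
    have ht' : (0:ℝ) < t := ht
    positivity


noncomputable def Kker (n : ℕ) (z : ℂ) : ℂ :=
  ∫ t in Set.Ioi (0:ℝ), ((t * Real.exp (-t) : ℝ) : ℂ) * (z - (t : ℂ)) ^ (-(n:ℤ))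

lemma ball_lb {c : ℝ} (hc : 0 < c) {z : ℂ} (hz : z ∈ Metric.ball ((-c : ℝ) : ℂ) (c/2))
    {t : ℝ} (ht : 0 < t) : (c + t)/2 ≤ ‖z - t‖ := by
  have hre : z.re ≤ -c/2 := by
    have h1 : |z.re - (-c)| ≤ ‖z - ((-c:ℝ):ℂ)‖ := by
      simpa using Complex.abs_re_le_norm (z - ((-c:ℝ):ℂ))
    have h2 : ‖z - ((-c:ℝ):ℂ)‖ < c/2 := by
      simpa [Metric.mem_ball, Complex.dist_eq] using hz
    have := (abs_lt.mp (h1.trans_lt h2)).2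
    linarith
  have h3 : (c+t)/2 ≤ t - z.re := by linarith
  calc (c+t)/2 ≤ t - z.re := h3
  _ ≤ |(z - t).re| := by
      rw [Complex.sub_re, Complex.ofReal_re, abs_sub_comm]
      exact le_abs_self _
  _ ≤ ‖z - t‖ := Complex.abs_re_le_norm _

lemma zsub_ne {c : ℝ} (hc : 0 < c) {z : ℂ} (hz : z ∈ Metric.ball ((-c : ℝ) : ℂ) (c/2))
    {t : ℝ} (ht : 0 < t) : z - (t:ℂ) ≠ 0 := by
  have := ball_lb hc hz ht
  intro h
  rw [h] at this
  simp at this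
  linarith

lemma Kker_bound {c : ℝ} (hc : 0 < c) (n : ℕ) {z : ℂ}
    (hz : z ∈ Metric.ball ((-c : ℝ) : ℂ) (c/2)) {t : ℝ} (ht : 0 < t) :
    ‖((t * Real.exp (-t) : ℝ) : ℂ) * (z - (t : ℂ)) ^ (-(n:ℤ))‖
      ≤ 2 ^ n * (t * Real.exp (-t) / (c + t) ^ n) := by
  have hct : (0:ℝ) < c + t := by linarith
  have hlb := ball_lb hc hz ht
  have habs : ‖(z - t) ^ (-(n:ℤ))‖ = (‖z - t‖ ^ n)⁻¹ := by
    rw [norm_zpow]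
    rw [zpow_neg, zpow_natCast]
  have hpos : (0:ℝ) < ‖z - t‖ := lt_of_lt_of_le (by linarith) hlb
  have hb : (‖z - t‖ ^ n)⁻¹ ≤ (((c+t)/2) ^ n)⁻¹ := by
    apply inv_anti₀ (pow_pos (by linarith) n)
    exact pow_le_pow_left₀ (by linarith) hlb n
  have h0 : 0 ≤ t * Real.exp (-t) := mul_nonneg ht.le (Real.exp_pos _).le
  calc ‖((t * Real.exp (-t) : ℝ) : ℂ) * (z - (t : ℂ)) ^ (-(n:ℤ))‖
      = (t * Real.exp (-t)) * ‖(z - t) ^ (-(n:ℤ))‖ := by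
        rw [norm_mul, Complex.norm_real, Real.norm_eq_abs, abs_of_nonneg h0]
  _ ≤ (t * Real.exp (-t)) * (((c+t)/2) ^ n)⁻¹ := by
      rw [habs]; exact mul_le_mul_of_nonneg_left hb h0
  _ = 2 ^ n * (t * Real.exp (-t) / (c + t) ^ n) := by
      rw [div_pow]
      field_simp

lemma Kker_meas {c : ℝ} (hc : 0 < c) (n : ℕ) {z : ℂ}
    (hz : z ∈ Metric.ball ((-c : ℝ) : ℂ) (c/2)) :
    AEStronglyMeasurable (fun t : ℝ => ((t * Real.exp (-t) : ℝ) : ℂ) * (z - (t : ℂ)) ^ (-(n:ℤ)))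
      (volume.restrict (Ioi 0)) := by
  apply ContinuousOn.aestronglyMeasurable _ measurableSet_Ioi
  apply ContinuousOn.mul
  · exact (Complex.continuous_ofReal.comp (continuous_id.mul
      (Real.continuous_exp.comp continuous_neg))).continuousOn
  · apply ContinuousOn.zpow₀
    · exact (continuous_const.sub Complex.continuous_ofReal).continuousOn
    · intro t ht
      exact Or.inl (zsub_ne hc hz ht)

lemma Kker_integrable {c : ℝ} (hc : 0 < c) (n : ℕ) {z : ℂ}
    (hz : z ∈ Metric.ball ((-c : ℝ) : ℂ) (c/2)) :
    IntegrableOn (fun t : ℝ => ((t * Real.exp (-t) : ℝ) : ℂ) * (z - (t : ℂ)) ^ (-(n:ℤ)))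
      (Ioi 0) := by
  refine Integrable.mono' ((integ_pow hc n).const_mul ((2:ℝ) ^ n)) (Kker_meas hc n hz) ?_
  filter_upwards [ae_restrict_mem measurableSet_Ioi] with t ht
  exact Kker_bound hc n hz ht


lemma Kker_hasDerivAt {c : ℝ} (hc : 0 < c) (n : ℕ) {z₀ : ℂ}
    (hz : z₀ ∈ Metric.ball ((-c : ℝ) : ℂ) (c/2)) :
    HasDerivAt (Kker n) (-(n:ℂ) * Kker (n+1) z₀) z₀ := by
  set ε : ℝ := c/2 - dist z₀ ((-c:ℝ):ℂ) with hε
  have hεpos : 0 < ε := by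
    rw [hε]; rw [Metric.mem_ball] at hz; linarith
  have hball : Metric.ball z₀ ε ⊆ Metric.ball ((-c:ℝ):ℂ) (c/2) := by
    intro w hw
    rw [Metric.mem_ball] at hw ⊢
    calc dist w ((-c:ℝ):ℂ) ≤ dist w z₀ + dist z₀ ((-c:ℝ):ℂ) := dist_triangle _ _ _
    _ < ε + dist z₀ ((-c:ℝ):ℂ) := by linarith
    _ = c/2 := by rw [hε]; ring
  have key := hasDerivAt_integral_of_dominated_loc_of_deriv_le (μ := volume.restrict (Ioi 0))
    (F := fun (z : ℂ) (t : ℝ) => ((t * Real.exp (-t) : ℝ) : ℂ) * (z - (t : ℂ)) ^ (-(n:ℤ)))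
    (F' := fun (z : ℂ) (t : ℝ) =>
      ((t * Real.exp (-t) : ℝ) : ℂ) * ((-(n:ℤ) : ℂ) * (z - (t : ℂ)) ^ (-(n:ℤ) - 1)))
    (x₀ := z₀) (bound := fun t => (n : ℝ) * (2 ^ (n+1) * (t * Real.exp (-t) / (c + t) ^ (n+1))))
    (Metric.ball_mem_nhds z₀ hεpos) ?_ (Kker_integrable hc n hz) ?_ ?_ ?_ ?_
  · have h2 : (∫ t in Ioi (0:ℝ), ((t * Real.exp (-t) : ℝ) : ℂ)
        * ((-(n:ℤ) : ℂ) * (z₀ - (t : ℂ)) ^ (-(n:ℤ) - 1)))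
        = -(n:ℂ) * Kker (n+1) z₀ := by
      rw [Kker, ← MeasureTheory.integral_const_mul]
      apply setIntegral_congr_fun measurableSet_Ioi
      intro t ht
      have : (-(n:ℤ) - 1 : ℤ) = -((n:ℕ)+1 : ℕ) := by push_cast; ring
      rw [this]
      push_cast
      ring
    rw [h2] at key
    exact key.2
  · filter_upwards with w
    by_cases hw : w ∈ Metric.ball ((-c:ℝ):ℂ) (c/2)
    · exact Kker_meas hc n hw
    · -- measurable anyway; use measurability
      apply Measurable.aestronglyMeasurable
      apply Measurable.mul
      · exact (Complex.measurable_ofReal.comp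
          (measurable_id.mul (Real.measurable_exp.comp measurable_neg)))
      · exact (measurable_const.sub Complex.measurable_ofReal).pow_const _
  · -- meas of F' z₀
    apply Measurable.aestronglyMeasurable
    apply Measurable.mul
    · exact (Complex.measurable_ofReal.comp
        (measurable_id.mul (Real.measurable_exp.comp measurable_neg)))
    · exact measurable_const.mul
        ((measurable_const.sub Complex.measurable_ofReal).pow_const _)
  · -- bound
    filter_upwards [ae_restrict_mem measurableSet_Ioi] with t ht w hw
    have hw' : w ∈ Metric.ball ((-c:ℝ):ℂ) (c/2) := hball hw
    have hb := Kker_bound hc (n+1) hw' ht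
    have heq : ((t * Real.exp (-t) : ℝ) : ℂ) * ((-(n:ℤ) : ℂ) * (w - (t : ℂ)) ^ (-(n:ℤ) - 1))
        = (-(n:ℤ) : ℂ) * (((t * Real.exp (-t) : ℝ) : ℂ) * (w - (t : ℂ)) ^ (-((n+1:ℕ):ℤ))) := by
      have : (-(n:ℤ) - 1 : ℤ) = -((n:ℕ)+1 : ℕ) := by push_cast; ring
      rw [this]; push_cast; ring
    rw [heq, norm_mul]
    have : ‖(-(n:ℤ) : ℂ)‖ = (n:ℝ) := by
      push_cast; rw [norm_neg, Complex.norm_natCast]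
    rw [this]
    exact mul_le_mul_of_nonneg_left hb (Nat.cast_nonneg n)
  · -- bound integrable
    exact (((integ_pow hc (n+1)).const_mul ((2:ℝ) ^ (n+1))).const_mul (n:ℝ))
  · -- differentiability
    filter_upwards [ae_restrict_mem measurableSet_Ioi] with t ht w hw
    have hw' : w ∈ Metric.ball ((-c:ℝ):ℂ) (c/2) := hball hw
    have hne : w - (t:ℂ) ≠ 0 := zsub_ne hc hw' ht
    have h1 : HasDerivAt (fun z : ℂ => (z - (t:ℂ)) ^ (-(n:ℤ)))
        ((-(n:ℤ) : ℂ) * (w - (t:ℂ)) ^ (-(n:ℤ) - 1)) w := by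
      have h0 : HasDerivAt (fun z : ℂ => z - (t:ℂ)) 1 w := (hasDerivAt_id w).sub_const _
      have h2 : HasDerivAt (fun u : ℂ => u ^ (-(n:ℤ)))
          ((-(n:ℤ) : ℂ) * (w - (t:ℂ)) ^ (-(n:ℤ) - 1)) (w - (t:ℂ)) := by
        have := hasDerivAt_zpow (-(n:ℤ)) (w - (t:ℂ)) (Or.inl hne)
        push_cast at this ⊢
        exact this
      exact h2.comp_sub_const w (t:ℂ)
    simpa using h1.const_mul (((t * Real.exp (-t) : ℝ) : ℂ))


lemma Hfun_eq_Kker (α : ℝ) : Hfun α = fun z => z + (α:ℂ) + α * Kker 1 z := by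
  funext z
  rw [Hfun, Kker]
  congr 1
  congr 1
  apply setIntegral_congr_fun measurableSet_Ioi
  intro t _
  simp [div_eq_mul_inv]

lemma Hfun_deriv1 {c : ℝ} (hc : 0 < c) (α : ℝ) {z : ℂ}
    (hz : z ∈ Metric.ball ((-c : ℝ) : ℂ) (c/2)) :
    HasDerivAt (Hfun α) (1 - α * Kker 2 z) z := by
  rw [Hfun_eq_Kker]
  have h := ((Kker_hasDerivAt hc 1 hz).const_mul (α:ℂ))
  have h2 := ((hasDerivAt_id z).add_const (α:ℂ)).add h
  refine h2.congr_deriv ?_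
  push_cast
  ring

lemma Hfun_deriv2 {c : ℝ} (hc : 0 < c) (α : ℝ) {z : ℂ}
    (hz : z ∈ Metric.ball ((-c : ℝ) : ℂ) (c/2)) :
    HasDerivAt (fun w => 1 - (α:ℂ) * Kker 2 w) (2 * α * Kker 3 z) z := by
  have h := ((Kker_hasDerivAt hc 2 hz).const_mul (α:ℂ)).const_sub 1
  refine h.congr_deriv ?_
  push_cast
  ring

lemma Hfun_deriv3 {c : ℝ} (hc : 0 < c) (α : ℝ) {z : ℂ}
    (hz : z ∈ Metric.ball ((-c : ℝ) : ℂ) (c/2)) :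
    HasDerivAt (fun w => 2 * (α:ℂ) * Kker 3 w) (-6 * α * Kker 4 z) z := by
  have h := ((Kker_hasDerivAt hc 3 hz).const_mul (2 * (α:ℂ)))
  refine h.congr_deriv ?_
  push_cast
  ring

lemma deriv_Hfun_eventually {c : ℝ} (hc : 0 < c) (α : ℝ) {z : ℂ}
    (hz : z ∈ Metric.ball ((-c : ℝ) : ℂ) (c/2)) :
    deriv (Hfun α) =ᶠ[nhds z] fun w => 1 - (α:ℂ) * Kker 2 w := by
  filter_upwards [Metric.isOpen_ball.mem_nhds hz] with w hw
  exact (Hfun_deriv1 hc α hw).deriv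

lemma iteratedDeriv2_Hfun {c : ℝ} (hc : 0 < c) (α : ℝ) :
    iteratedDeriv 2 (Hfun α) ((-c : ℝ) : ℂ) = 2 * α * Kker 3 ((-c : ℝ) : ℂ) := by
  have hmem : ((-c : ℝ) : ℂ) ∈ Metric.ball ((-c : ℝ) : ℂ) (c/2) :=
    Metric.mem_ball_self (by linarith)
  rw [show (2:ℕ) = 1 + 1 from rfl, iteratedDeriv_succ, iteratedDeriv_one]
  rw [(deriv_Hfun_eventually hc α hmem).deriv_eq]
  exact (Hfun_deriv2 hc α hmem).deriv

lemma iteratedDeriv3_Hfun {c : ℝ} (hc : 0 < c) (α : ℝ) :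
    iteratedDeriv 3 (Hfun α) ((-c : ℝ) : ℂ) = -6 * α * Kker 4 ((-c : ℝ) : ℂ) := by
  have hmem : ((-c : ℝ) : ℂ) ∈ Metric.ball ((-c : ℝ) : ℂ) (c/2) :=
    Metric.mem_ball_self (by linarith)
  rw [show (3:ℕ) = 2 + 1 from rfl, iteratedDeriv_succ]
  have h2 : iteratedDeriv 2 (Hfun α) =ᶠ[nhds ((-c:ℝ):ℂ)] fun w => 2 * (α:ℂ) * Kker 3 w := by
    filter_upwards [Metric.isOpen_ball.mem_nhds hmem] with w hw
    rw [show (2:ℕ) = 1 + 1 from rfl, iteratedDeriv_succ, iteratedDeriv_one]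
    rw [(deriv_Hfun_eventually hc α hw).deriv_eq]
    exact (Hfun_deriv2 hc α hw).deriv
  rw [h2.deriv_eq]
  exact (Hfun_deriv3 hc α hmem).deriv

lemma Kker_at_neg_c {c : ℝ} (hc : 0 < c) (n : ℕ) :
    Kker n ((-c : ℝ) : ℂ) = (-1) ^ n *
      ((∫ t in Ioi (0:ℝ), t * Real.exp (-t) / (c + t) ^ n : ℝ) : ℂ) := by
  have hcoe : ((∫ t in Ioi (0:ℝ), t * Real.exp (-t) / (c + t) ^ n : ℝ) : ℂ)
      = ∫ t in Ioi (0:ℝ), ((t * Real.exp (-t) / (c + t) ^ n : ℝ) : ℂ) :=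
    (integral_ofReal (𝕜 := ℂ)).symm
  rw [Kker, hcoe, ← MeasureTheory.integral_const_mul]
  apply setIntegral_congr_fun measurableSet_Ioi
  intro t ht
  have ht' : (0:ℝ) < t := ht
  have hct : (c + t : ℂ) ≠ 0 := by
    have : (0:ℝ) < c + t := by linarith
    exact_mod_cast ne_of_gt (show (0:ℝ) < c + t from this)
  show ((t * Real.exp (-t) : ℝ) : ℂ) * (((-c : ℝ) : ℂ) - (t:ℂ)) ^ (-(n:ℤ))
      = (-1) ^ n * ((t * Real.exp (-t) / (c + t) ^ n : ℝ) : ℂ)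
  have h1 : ((-c : ℝ) : ℂ) - (t:ℂ) = -((c:ℂ) + t) := by push_cast; ring
  rw [h1, show -((c:ℂ) + t) = (-1) * ((c:ℂ) + t) by ring, mul_zpow]
  have h2 : ((-1 : ℂ)) ^ (-(n:ℤ)) = (-1) ^ n := by
    rw [zpow_neg, zpow_natCast, ← inv_pow, inv_neg, inv_one]
  rw [h2, zpow_neg, zpow_natCast]
  rw [Complex.ofReal_div, Complex.ofReal_pow, Complex.ofReal_add, div_eq_mul_inv]
  ring


lemma Fint_meas (x y : ℝ) :
    AEStronglyMeasurable (fun t : ℝ => t * Real.exp (-t) / ((x - t)^2 + y^2))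
      (volume.restrict (Ioi 0)) := by
  apply Measurable.aestronglyMeasurable
  exact (measurable_id.mul (Real.measurable_exp.comp measurable_neg)).div
    ((((measurable_const.sub measurable_id).pow measurable_const).add measurable_const))

lemma Fint_integrable {x y : ℝ} (hy : y ≠ 0) :
    IntegrableOn (fun t : ℝ => t * Real.exp (-t) / ((x - t)^2 + y^2)) (Ioi 0) := by
  have hy2 : 0 < y^2 := by positivity
  refine Integrable.mono' (integ_texp.const_mul (1 / y^2)) (Fint_meas x y) ?_
  filter_upwards [ae_restrict_mem measurableSet_Ioi] with t ht
  have ht' : (0:ℝ) < t := ht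
  have h0 : 0 ≤ t * Real.exp (-t) := by positivity
  have hd : y^2 ≤ (x - t)^2 + y^2 := by nlinarith [sq_nonneg (x - t)]
  rw [Real.norm_eq_abs, abs_of_nonneg (by positivity)]
  calc t * Real.exp (-t) / ((x - t)^2 + y^2) ≤ t * Real.exp (-t) / y^2 :=
        div_le_div_of_nonneg_left h0 hy2 hd
  _ = 1 / y^2 * (t * Real.exp (-t)) := by ring

lemma Fint_mono {x a b : ℝ} (ha : 0 < a) (hab : a ≤ b) : Fint x b ≤ Fint x a := by
  apply setIntegral_mono_on (Fint_integrable (ne_of_gt (lt_of_lt_of_le ha hab)))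
    (Fint_integrable (ne_of_gt ha)) measurableSet_Ioi
  intro t ht
  have ht' : (0:ℝ) < t := ht
  apply div_le_div_of_nonneg_left (by positivity) (by positivity)
  nlinarith

lemma Fint_neg_c_lt {α c : ℝ} (hα : 0 < α) (hc : 0 < c)
    (hceq : (∫ t in Set.Ioi (0:ℝ), t * Real.exp (-t) / (c + t)^2) = 1/α)
    {ε : ℝ} (hε : 0 < ε) : Fint (-c) ε < 1/α := by
  have hint1 : IntegrableOn (fun t : ℝ => t * Real.exp (-t) / (c + t)^2) (Ioi 0) := integ_pow hc 2
  have hint2 : IntegrableOn (fun t : ℝ => t * Real.exp (-t) / ((-c - t)^2 + ε^2)) (Ioi 0) :=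
    Fint_integrable (ne_of_gt hε)
  have hkey : 0 < ∫ t in Ioi (0:ℝ),
      (t * Real.exp (-t) / (c + t)^2 - t * Real.exp (-t) / ((-c - t)^2 + ε^2)) := by
    rw [setIntegral_pos_iff_support_of_nonneg_ae]
    · have hsub : Ioi (0:ℝ) ⊆ Function.support
          (fun t => t * Real.exp (-t) / (c + t)^2 - t * Real.exp (-t) / ((-c - t)^2 + ε^2))
          ∩ Ioi 0 := by
        intro t ht
        have ht' : (0:ℝ) < t := ht
        refine ⟨?_, ht⟩
        have h1 : t * Real.exp (-t) / ((-c - t)^2 + ε^2) < t * Real.exp (-t) / (c + t)^2 := by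
          apply div_lt_div_of_pos_left (by positivity) (by positivity)
          nlinarith
        exact ne_of_gt (by linarith)
      calc (0:ENNReal) < volume (Ioi (0:ℝ)) := by simp [Real.volume_Ioi]
      _ ≤ _ := measure_mono hsub
    · filter_upwards [ae_restrict_mem measurableSet_Ioi] with t ht
      have ht' : (0:ℝ) < t := ht
      have h1 : t * Real.exp (-t) / ((-c - t)^2 + ε^2) ≤ t * Real.exp (-t) / (c + t)^2 := by
        apply div_le_div_of_nonneg_left (by positivity) (by positivity)
        nlinarith
      simp only [Pi.zero_apply]
      linarith
    · exact hint1.sub hint2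
  rw [integral_sub hint1 hint2, hceq] at hkey
  have : Fint (-c) ε = ∫ t in Ioi (0:ℝ), t * Real.exp (-t) / ((-c - t)^2 + ε^2) := by
    rw [Fint]
  linarith [this ▸ hkey]

lemma Fint_cont_in_x {y : ℝ} (hy : 0 < y) (x₀ : ℝ) :
    Tendsto (fun x => Fint x y) (nhds x₀) (nhds (Fint x₀ y)) := by
  apply tendsto_integral_filter_of_dominated_convergence
    (bound := fun t => t * Real.exp (-t) / y^2)
  · filter_upwards with x
    exact Fint_meas x y
  · filter_upwards with x
    filter_upwards [ae_restrict_mem measurableSet_Ioi] with t ht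
    have ht' : (0:ℝ) < t := ht
    rw [Real.norm_eq_abs, abs_of_nonneg (by positivity)]
    apply div_le_div_of_nonneg_left (by positivity) (by positivity)
    nlinarith [sq_nonneg (x - t)]
  · exact (integ_texp.div_const _)
  · filter_upwards [ae_restrict_mem measurableSet_Ioi] with t _
    have hcont : Continuous (fun x : ℝ => t * Real.exp (-t) / ((x - t)^2 + y^2)) := by
      apply continuous_const.div
      · continuity
      · intro x; nlinarith [sq_nonneg (x - t)]
    exact hcont.tendsto x₀

lemma v_tendsto_zero {α c : ℝ} (hα : 0 < α) (hc : 0 < c)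
    (hceq : (∫ t in Set.Ioi (0:ℝ), t * Real.exp (-t) / (c + t)^2) = 1/α)
    {v : ℝ → ℝ} (hvpos : ∀ x, -c < x → 0 < v x)
    (hveq : ∀ x, -c < x → Fint x (v x) = 1/α) :
    Tendsto v (nhdsWithin (-c) (Ioi (-c))) (nhds 0) := by
  rw [tendsto_order]
  constructor
  · intro a ha
    filter_upwards [self_mem_nhdsWithin] with x hx
    exact lt_of_lt_of_le ha (le_of_lt (hvpos x hx))
  · intro b hb
    have hlt := Fint_neg_c_lt hα hc hceq hb
    have hcont : Tendsto (fun x => Fint x b) (nhdsWithin (-c) (Ioi (-c))) (nhds (Fint (-c) b)) :=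
      (Fint_cont_in_x hb (-c)).mono_left nhdsWithin_le_nhds
    have hev : ∀ᶠ x in nhdsWithin (-c) (Ioi (-c)), Fint x b < 1/α := by
      have : Iio (1/α) ∈ nhds (Fint (-c) b) := Iio_mem_nhds hlt
      exact hcont this
    filter_upwards [hev, self_mem_nhdsWithin] with x hx1 hx2
    by_contra hcon
    push_neg at hcon
    have := Fint_mono (x := x) hb hcon
    rw [hveq x hx2] at this
    linarith


section ratio
variable {α c : ℝ} (hα : 0 < α) (hc : 0 < c)

lemma Dlb (hc : 0 < c) {x : ℝ} (hx : x ∈ Ioo (-c) (-c + c/2)) {t : ℝ} (ht : 0 < t) (y : ℝ) :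
    (c+t)^2/4 ≤ (x - t)^2 + y^2 := by
  obtain ⟨hx1, hx2⟩ := hx
  nlinarith [sq_nonneg y, sq_nonneg (x - t)]

lemma meas_Dn {x y : ℝ} : AEStronglyMeasurable
    (fun t : ℝ => t * Real.exp (-t) / (((x - t)^2 + y^2) * (c+t)^2))
    (volume.restrict (Ioi 0)) := by
  apply Measurable.aestronglyMeasurable
  apply Measurable.div
  · exact measurable_id.mul (Real.measurable_exp.comp measurable_neg)
  · exact ((((measurable_const.sub measurable_id).pow measurable_const).add
      measurable_const).mul ((measurable_const.add measurable_id).pow measurable_const))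

lemma meas_N {x y : ℝ} : AEStronglyMeasurable
    (fun t : ℝ => t * Real.exp (-t) * (2*(c+t) - (x+c)) / (((x - t)^2 + y^2) * (c+t)^2))
    (volume.restrict (Ioi 0)) := by
  apply Measurable.aestronglyMeasurable
  apply Measurable.div
  · exact (measurable_id.mul (Real.measurable_exp.comp measurable_neg)).mul
      ((measurable_const.mul (measurable_const.add measurable_id)).sub measurable_const)
  · exact ((((measurable_const.sub measurable_id).pow measurable_const).add
      measurable_const).mul ((measurable_const.add measurable_id).pow measurable_const))

lemma bound_Dn (hc : 0 < c) {x : ℝ} (hx : x ∈ Ioo (-c) (-c + c/2)) {t : ℝ} (ht : 0 < t) (y : ℝ) :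
    ‖t * Real.exp (-t) / (((x - t)^2 + y^2) * (c+t)^2)‖
      ≤ 4 * (t * Real.exp (-t) / (c+t)^4) := by
  have hct : (0:ℝ) < c + t := by linarith
  have hD := Dlb hc hx ht y
  have hDpos : (0:ℝ) < (x - t)^2 + y^2 := lt_of_lt_of_le (by positivity) hD
  have h0 : 0 ≤ t * Real.exp (-t) := by positivity
  rw [Real.norm_eq_abs, abs_of_nonneg (by positivity)]
  calc t * Real.exp (-t) / (((x - t)^2 + y^2) * (c+t)^2)
      ≤ t * Real.exp (-t) / ((c+t)^2/4 * (c+t)^2) := by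
        apply div_le_div_of_nonneg_left h0 (by positivity)
        apply mul_le_mul_of_nonneg_right hD (by positivity)
  _ = 4 * (t * Real.exp (-t) / (c+t)^4) := by
      field_simp

lemma bound_N (hc : 0 < c) {x : ℝ} (hx : x ∈ Ioo (-c) (-c + c/2)) {t : ℝ} (ht : 0 < t) (y : ℝ) :
    ‖t * Real.exp (-t) * (2*(c+t) - (x+c)) / (((x - t)^2 + y^2) * (c+t)^2)‖
      ≤ 8 * (t * Real.exp (-t) / (c+t)^3) := by
  have hct : (0:ℝ) < c + t := by linarith
  have hD := Dlb hc hx ht y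
  have hDpos : (0:ℝ) < (x - t)^2 + y^2 := lt_of_lt_of_le (by positivity) hD
  have h0 : 0 ≤ t * Real.exp (-t) := by positivity
  obtain ⟨hx1, hx2⟩ := hx
  have hnum0 : 0 ≤ 2*(c+t) - (x+c) := by linarith
  have hnum1 : t * Real.exp (-t) * (2*(c+t) - (x+c)) ≤ t * Real.exp (-t) * (2*(c+t)) := by
    apply mul_le_mul_of_nonneg_left (by linarith) h0
  rw [Real.norm_eq_abs, abs_of_nonneg (by positivity)]
  calc t * Real.exp (-t) * (2*(c+t) - (x+c)) / (((x - t)^2 + y^2) * (c+t)^2)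
      ≤ t * Real.exp (-t) * (2*(c+t)) / (((x - t)^2 + y^2) * (c+t)^2) := by
        have := mul_le_mul_of_nonneg_right hnum1 (le_of_lt (by positivity : (0:ℝ) < (((x - t)^2 + y^2) * (c+t)^2)⁻¹))
        rw [div_eq_mul_inv, div_eq_mul_inv]
        exact this
  _ ≤ t * Real.exp (-t) * (2*(c+t)) / ((c+t)^2/4 * (c+t)^2) := by
        apply div_le_div_of_nonneg_left (by positivity) (by positivity)
        apply mul_le_mul_of_nonneg_right hD (by positivity)
  _ = 8 * (t * Real.exp (-t) / (c+t)^3) := by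
      field_simp
      ring

lemma vsq_identity (hα : 0 < α) (hc : 0 < c)
    (hceq : (∫ t in Set.Ioi (0:ℝ), t * Real.exp (-t) / (c + t)^2) = 1/α)
    {v : ℝ → ℝ} (hvpos : ∀ x, -c < x → 0 < v x)
    (hveq : ∀ x, -c < x → Fint x (v x) = 1/α)
    {x : ℝ} (hx : x ∈ Ioo (-c) (-c + c/2)) :
    (v x)^2 * (∫ t in Ioi (0:ℝ), t * Real.exp (-t) / (((x - t)^2 + (v x)^2) * (c+t)^2))
      = (x + c) * (∫ t in Ioi (0:ℝ),
          t * Real.exp (-t) * (2*(c+t) - (x+c)) / (((x - t)^2 + (v x)^2) * (c+t)^2)) := by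
  obtain ⟨hx1, hx2⟩ := hx
  set y := v x with hy
  have hy0 : 0 < y := hvpos x hx1
  have hint1 : IntegrableOn (fun t : ℝ => t * Real.exp (-t) / (c + t)^2) (Ioi 0) := integ_pow hc 2
  have hint2 : IntegrableOn (fun t : ℝ => t * Real.exp (-t) / ((x - t)^2 + y^2)) (Ioi 0) :=
    Fint_integrable (ne_of_gt hy0)
  have hintDn : IntegrableOn
      (fun t : ℝ => t * Real.exp (-t) / (((x - t)^2 + y^2) * (c+t)^2)) (Ioi 0) := by
    refine Integrable.mono' ((integ_pow hc 4).const_mul 4) meas_Dn ?_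
    filter_upwards [ae_restrict_mem measurableSet_Ioi] with t ht
    exact bound_Dn hc ⟨hx1, hx2⟩ ht y
  have hintN : IntegrableOn
      (fun t : ℝ => t * Real.exp (-t) * (2*(c+t) - (x+c)) / (((x - t)^2 + y^2) * (c+t)^2))
      (Ioi 0) := by
    refine Integrable.mono' ((integ_pow hc 3).const_mul 8) meas_N ?_
    filter_upwards [ae_restrict_mem measurableSet_Ioi] with t ht
    exact bound_N hc ⟨hx1, hx2⟩ ht y
  have e1 : (∫ t in Ioi (0:ℝ),
      (t * Real.exp (-t) / (c + t)^2 - t * Real.exp (-t) / ((x - t)^2 + y^2))) = 0 := by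
    rw [integral_sub hint1 hint2, hceq]
    have := hveq x hx1
    rw [Fint] at this
    rw [← hy] at this
    rw [this]
    ring
  have e2 : (∫ t in Ioi (0:ℝ),
      (t * Real.exp (-t) / (c + t)^2 - t * Real.exp (-t) / ((x - t)^2 + y^2)))
      = y^2 * (∫ t in Ioi (0:ℝ), t * Real.exp (-t) / (((x - t)^2 + y^2) * (c+t)^2))
        - (x + c) * (∫ t in Ioi (0:ℝ),
            t * Real.exp (-t) * (2*(c+t) - (x+c)) / (((x - t)^2 + y^2) * (c+t)^2)) := by
    rw [← MeasureTheory.integral_const_mul, ← MeasureTheory.integral_const_mul,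
      ← integral_sub (hintDn.const_mul _) (hintN.const_mul _)]
    apply setIntegral_congr_fun measurableSet_Ioi
    intro t ht
    have ht' : (0:ℝ) < t := ht
    have hct : (0:ℝ) < c + t := by linarith
    have hD := Dlb hc ⟨hx1, hx2⟩ ht' y
    have hDpos : (0:ℝ) < (x - t)^2 + y^2 := lt_of_lt_of_le (by positivity) hD
    field_simp
    ring
  rw [e2] at e1
  linarith

lemma tendsto_x_self {c : ℝ} :
    Tendsto (fun x : ℝ => x) (nhdsWithin (-c) (Ioi (-c))) (nhds (-c)) :=
  tendsto_id.mono_left nhdsWithin_le_nhds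

lemma ratio_limit (hα : 0 < α) (hc : 0 < c)
    (hceq : (∫ t in Set.Ioi (0:ℝ), t * Real.exp (-t) / (c + t)^2) = 1/α)
    {v : ℝ → ℝ} (hvpos : ∀ x, -c < x → 0 < v x)
    (hveq : ∀ x, -c < x → Fint x (v x) = 1/α) :
    Tendsto (fun x => (v x)^2 / (x + c)) (nhdsWithin (-c) (Ioi (-c)))
      (nhds (2 * (∫ t in Ioi (0:ℝ), t * Real.exp (-t) / (c+t)^3)
        / (∫ t in Ioi (0:ℝ), t * Real.exp (-t) / (c+t)^4))) := by
  set l := nhdsWithin (-c : ℝ) (Ioi (-c)) with hl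
  have hvt : Tendsto v l (nhds 0) := v_tendsto_zero hα hc hceq hvpos hveq
  have hIoo : Ioo (-c) (-c + c/2) ∈ l := by
    apply Ioo_mem_nhdsGT_of_mem
    constructor
    · exact le_refl _
    · linarith
  -- pointwise limit of D
  have hDlim : ∀ t : ℝ, 0 < t → Tendsto (fun x => ((x - t)^2 + (v x)^2) * (c+t)^2) l
      (nhds ((c+t)^2 * (c+t)^2)) := by
    intro t ht
    have h1 : Tendsto (fun x : ℝ => (x - t)^2 + (v x)^2) l (nhds ((c+t)^2)) := by
      have h2 : Tendsto (fun x : ℝ => (x - t)^2) l (nhds ((-c - t)^2)) :=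
        ((tendsto_x_self.sub tendsto_const_nhds).pow 2)
      have h3 : Tendsto (fun x : ℝ => (v x)^2) l (nhds (0^2)) := hvt.pow 2
      have h4 := h2.add h3
      have h5 : (-c - t)^2 + 0^2 = (c+t)^2 := by ring
      rwa [h5] at h4
    have := h1.mul_const ((c+t)^2)
    exact this
  -- limits of Dn and N
  have hDn : Tendsto (fun x => ∫ t in Ioi (0:ℝ),
      t * Real.exp (-t) / (((x - t)^2 + (v x)^2) * (c+t)^2)) l
      (nhds (∫ t in Ioi (0:ℝ), t * Real.exp (-t) / (c+t)^4)) := by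
    have key : Tendsto (fun x => ∫ t in Ioi (0:ℝ),
        t * Real.exp (-t) / (((x - t)^2 + (v x)^2) * (c+t)^2)) l
        (nhds (∫ t in Ioi (0:ℝ), t * Real.exp (-t) / ((c+t)^2 * (c+t)^2))) := by
      apply tendsto_integral_filter_of_dominated_convergence
        (bound := fun t => 4 * (t * Real.exp (-t) / (c+t)^4))
      · filter_upwards with x; exact meas_Dn
      · filter_upwards [hIoo] with x hx
        filter_upwards [ae_restrict_mem measurableSet_Ioi] with t ht
        exact bound_Dn hc hx ht (v x)
      · exact (integ_pow hc 4).const_mul 4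
      · filter_upwards [ae_restrict_mem measurableSet_Ioi] with t ht
        have ht' : (0:ℝ) < t := ht
        have hct : (0:ℝ) < c + t := by linarith
        exact (tendsto_const_nhds.div (hDlim t ht') (by positivity))
    convert key using 2
    apply setIntegral_congr_fun measurableSet_Ioi
    intro t ht
    show t * Real.exp (-t) / (c + t) ^ 4 = t * Real.exp (-t) / ((c + t) ^ 2 * (c + t) ^ 2)
    ring
  have hN : Tendsto (fun x => ∫ t in Ioi (0:ℝ),
      t * Real.exp (-t) * (2*(c+t) - (x+c)) / (((x - t)^2 + (v x)^2) * (c+t)^2)) l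
      (nhds (2 * ∫ t in Ioi (0:ℝ), t * Real.exp (-t) / (c+t)^3)) := by
    have key : Tendsto (fun x => ∫ t in Ioi (0:ℝ),
        t * Real.exp (-t) * (2*(c+t) - (x+c)) / (((x - t)^2 + (v x)^2) * (c+t)^2)) l
        (nhds (∫ t in Ioi (0:ℝ),
          t * Real.exp (-t) * (2*(c+t)) / ((c+t)^2 * (c+t)^2))) := by
      apply tendsto_integral_filter_of_dominated_convergence
        (bound := fun t => 8 * (t * Real.exp (-t) / (c+t)^3))
      · filter_upwards with x; exact meas_N
      · filter_upwards [hIoo] with x hx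
        filter_upwards [ae_restrict_mem measurableSet_Ioi] with t ht
        exact bound_N hc hx ht (v x)
      · exact (integ_pow hc 3).const_mul 8
      · filter_upwards [ae_restrict_mem measurableSet_Ioi] with t ht
        have ht' : (0:ℝ) < t := ht
        have hct : (0:ℝ) < c + t := by linarith
        have hnum : Tendsto (fun x : ℝ => t * Real.exp (-t) * (2*(c+t) - (x+c))) l
            (nhds (t * Real.exp (-t) * (2*(c+t)))) := by
          have h4 : Tendsto (fun x : ℝ => 2*(c+t) - (x+c)) l (nhds (2*(c+t) - (-c+c))) :=
            tendsto_const_nhds.sub (tendsto_x_self.add tendsto_const_nhds)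
          have h5 := (tendsto_const_nhds (x := t * Real.exp (-t))).mul h4
          have h6 : t * Real.exp (-t) * (2*(c+t) - (-c+c)) = t * Real.exp (-t) * (2*(c+t)) := by
            ring
          rwa [h6] at h5
        exact hnum.div (hDlim t ht') (by positivity)
    have heq : (∫ t in Ioi (0:ℝ), t * Real.exp (-t) * (2*(c+t)) / ((c+t)^2 * (c+t)^2))
        = 2 * ∫ t in Ioi (0:ℝ), t * Real.exp (-t) / (c+t)^3 := by
      rw [← MeasureTheory.integral_const_mul]
      apply setIntegral_congr_fun measurableSet_Ioi
      intro t ht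
      have ht' : (0:ℝ) < t := ht
      have hct : (0:ℝ) < c + t := by linarith
      field_simp
    rw [heq] at key
    exact key
  have hI4pos := integ_pow_pos hc 4
  have hfinal := hN.div hDn (ne_of_gt hI4pos)
  apply hfinal.congr'
  filter_upwards [hIoo] with x hx
  have hiden := vsq_identity hα hc hceq hvpos hveq hx
  obtain ⟨hx1, hx2⟩ := hx
  have hxc : 0 < x + c := by linarith
  have hDnpos : 0 < ∫ t in Ioi (0:ℝ),
      t * Real.exp (-t) / (((x - t)^2 + (v x)^2) * (c+t)^2) := by
    rw [setIntegral_pos_iff_support_of_nonneg_ae]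
    · have hsub : Ioi (0:ℝ) ⊆ Function.support
          (fun t => t * Real.exp (-t) / (((x - t)^2 + (v x)^2) * (c+t)^2)) ∩ Ioi 0 := by
        intro t ht
        have ht' : (0:ℝ) < t := ht
        have hD := Dlb hc ⟨hx1, hx2⟩ ht' (v x)
        have hDpos : (0:ℝ) < (x - t)^2 + (v x)^2 := lt_of_lt_of_le (by positivity) hD
        have hct : (0:ℝ) < c + t := by linarith
        exact ⟨ne_of_gt (by positivity), ht⟩
      calc (0:ENNReal) < volume (Ioi (0:ℝ)) := by simp [Real.volume_Ioi]
      _ ≤ _ := measure_mono hsub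
    · filter_upwards [ae_restrict_mem measurableSet_Ioi] with t ht
      have ht' : (0:ℝ) < t := ht
      have hD := Dlb hc ⟨hx1, hx2⟩ ht' (v x)
      have hDpos : (0:ℝ) < (x - t)^2 + (v x)^2 := lt_of_lt_of_le (by positivity) hD
      have hct : (0:ℝ) < c + t := by linarith
      simp only [Pi.zero_apply]
      positivity
    · refine Integrable.mono' ((integ_pow hc 4).const_mul 4) meas_Dn ?_
      filter_upwards [ae_restrict_mem measurableSet_Ioi] with t ht
      exact bound_Dn hc ⟨hx1, hx2⟩ ht (v x)
  rw [Pi.div_apply, div_eq_div_iff (ne_of_gt hDnpos) (ne_of_gt hxc)]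
  linarith [hiden]
end ratio


lemma sqrt_ratio_limit {c γ' : ℝ} (hγ' : 0 < γ') {v : ℝ → ℝ}
    (hvpos : ∀ x, -c < x → 0 < v x)
    (hrat : Tendsto (fun x => (v x)^2 / (x + c)) (nhdsWithin (-c) (Ioi (-c))) (nhds γ')) :
    Tendsto (fun x => v x / (Real.sqrt γ' * Real.sqrt (x + c)))
      (nhdsWithin (-c) (Ioi (-c))) (nhds 1) := by
  have h1 : Tendsto (fun x => (v x)^2 / (x + c) / γ') (nhdsWithin (-c) (Ioi (-c)))
      (nhds (γ' / γ')) := hrat.div_const _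
  rw [div_self (ne_of_gt hγ')] at h1
  have h2 : Tendsto (fun x => Real.sqrt ((v x)^2 / (x + c) / γ'))
      (nhdsWithin (-c) (Ioi (-c))) (nhds 1) := by
    have := (Real.continuous_sqrt.tendsto 1).comp h1
    rwa [Real.sqrt_one] at this
  apply h2.congr'
  filter_upwards [self_mem_nhdsWithin] with x hx
  have hx' : -c < x := hx
  have hxc : 0 < x + c := by linarith
  have hv := hvpos x hx'
  rw [Real.sqrt_div (by positivity), Real.sqrt_div (by positivity), Real.sqrt_sq hv.le]
  rw [div_div, mul_comm (Real.sqrt (x+c))]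


section cplx
variable {α c : ℝ}

lemma cmeas1 (w : ℂ) : AEStronglyMeasurable
    (fun t : ℝ => ((t * Real.exp (-t) : ℝ) : ℂ) / (w - (t:ℂ))) (volume.restrict (Ioi 0)) := by
  apply Measurable.aestronglyMeasurable
  exact (Complex.measurable_ofReal.comp
    (measurable_id.mul (Real.measurable_exp.comp measurable_neg))).div
    (measurable_const.sub Complex.measurable_ofReal)

lemma cmeas2 (w : ℂ) (c : ℝ) : AEStronglyMeasurable
    (fun t : ℝ => ((t * Real.exp (-t) : ℝ) : ℂ) / ((w - (t:ℂ)) * ((c:ℂ) + t)))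
    (volume.restrict (Ioi 0)) := by
  apply Measurable.aestronglyMeasurable
  exact (Complex.measurable_ofReal.comp
    (measurable_id.mul (Real.measurable_exp.comp measurable_neg))).div
    ((measurable_const.sub Complex.measurable_ofReal).mul
      (measurable_const.add Complex.measurable_ofReal))

lemma cmeas3 (w : ℂ) (c : ℝ) : AEStronglyMeasurable
    (fun t : ℝ => ((t * Real.exp (-t) / (c + t)^2 : ℝ) : ℂ) / (w - (t:ℂ)))
    (volume.restrict (Ioi 0)) := by
  apply Measurable.aestronglyMeasurable
  apply Measurable.div _ (measurable_const.sub Complex.measurable_ofReal)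
  apply Complex.measurable_ofReal.comp
  exact (measurable_id.mul (Real.measurable_exp.comp measurable_neg)).div
    ((measurable_const.add measurable_id).pow measurable_const)

lemma wsub_abs {w : ℂ} (hw : 0 < w.im) (t : ℝ) : w.im ≤ ‖w - t‖ := by
  calc w.im ≤ |(w - t).im| := by
        rw [Complex.sub_im, Complex.ofReal_im, sub_zero]
        exact le_abs_self _
  _ ≤ ‖w - t‖ := Complex.abs_im_le_norm _

lemma wsub_ne {w : ℂ} (hw : 0 < w.im) (t : ℝ) : w - (t:ℂ) ≠ 0 := by
  intro h
  have := wsub_abs hw t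
  rw [h] at this
  simp at this
  linarith

lemma cint1 (hc : 0 < c) {w : ℂ} (hw : 0 < w.im) :
    IntegrableOn (fun t : ℝ => ((t * Real.exp (-t) : ℝ) : ℂ) / (w - (t:ℂ))) (Ioi 0) := by
  refine Integrable.mono' (integ_texp.const_mul (1 / w.im)) (cmeas1 w) ?_
  filter_upwards [ae_restrict_mem measurableSet_Ioi] with t ht
  have ht' : (0:ℝ) < t := ht
  have h0 : 0 ≤ t * Real.exp (-t) := by positivity
  rw [norm_div, Complex.norm_real, Real.norm_eq_abs, abs_of_nonneg h0]
  rw [div_le_iff₀ (lt_of_lt_of_le hw (wsub_abs hw t))]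
  calc t * Real.exp (-t) = 1 / w.im * (t * Real.exp (-t)) * w.im := by field_simp
  _ ≤ 1 / w.im * (t * Real.exp (-t)) * ‖w - (t:ℂ)‖ := by
      apply mul_le_mul_of_nonneg_left (wsub_abs hw t) (by positivity)

lemma cint_negc (hc : 0 < c) :
    IntegrableOn (fun t : ℝ => ((t * Real.exp (-t) : ℝ) : ℂ) / (((-c:ℝ):ℂ) - (t:ℂ))) (Ioi 0) := by
  refine Integrable.mono' (integ_pow hc 1) (cmeas1 _) ?_
  filter_upwards [ae_restrict_mem measurableSet_Ioi] with t ht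
  have ht' : (0:ℝ) < t := ht
  have hct : (0:ℝ) < c + t := by linarith
  have h0 : 0 ≤ t * Real.exp (-t) := by positivity
  have habs : ‖((-c:ℝ):ℂ) - (t:ℂ)‖ = c + t := by
    rw [show ((-c:ℝ):ℂ) - (t:ℂ) = -((c:ℂ) + t) by push_cast; ring]
    rw [norm_neg]
    rw [show ((c:ℂ) + t) = ((c + t : ℝ):ℂ) by push_cast; ring]
    rw [Complex.norm_real, Real.norm_eq_abs, abs_of_pos hct]
  rw [norm_div, Complex.norm_real, Real.norm_eq_abs, abs_of_nonneg h0]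
  show t * Real.exp (-t) / ‖((-c:ℝ):ℂ) - (t:ℂ)‖ ≤ t * Real.exp (-t) / (c+t)^1
  rw [habs, pow_one]

lemma cint2 (hc : 0 < c) {w : ℂ} (hw : 0 < w.im) :
    IntegrableOn (fun t : ℝ => ((t * Real.exp (-t) : ℝ) : ℂ) / ((w - (t:ℂ)) * ((c:ℂ) + t)))
      (Ioi 0) := by
  refine Integrable.mono' ((integ_pow hc 1).const_mul (1 / w.im)) (cmeas2 w c) ?_
  filter_upwards [ae_restrict_mem measurableSet_Ioi] with t ht
  have ht' : (0:ℝ) < t := ht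
  have hct : (0:ℝ) < c + t := by linarith
  have h0 : 0 ≤ t * Real.exp (-t) := by positivity
  have habs : ‖(c:ℂ) + t‖ = c + t := by
    rw [show ((c:ℂ) + t) = ((c + t : ℝ):ℂ) by push_cast; ring, Complex.norm_real, Real.norm_eq_abs, abs_of_pos hct]
  rw [norm_div, Complex.norm_real, Real.norm_eq_abs, abs_of_nonneg h0, norm_mul]
  show t * Real.exp (-t) / (‖w - t‖ * ‖(c:ℂ) + t‖)
      ≤ 1 / w.im * (t * Real.exp (-t) / (c + t)^1)
  rw [habs, pow_one]
  have hge := wsub_abs hw t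
  rw [div_le_iff₀ (mul_pos (lt_of_lt_of_le hw hge) (by positivity : (0:ℝ) < c + t))]
  calc t * Real.exp (-t) = (1 / w.im * (t * Real.exp (-t) / (c+t))) * (w.im * (c+t)) := by
        field_simp
  _ ≤ (1 / w.im * (t * Real.exp (-t) / (c+t))) * (‖w - t‖ * (c+t)) := by
      apply mul_le_mul_of_nonneg_left _ (by positivity)
      apply mul_le_mul_of_nonneg_right hge hct.le

lemma cint3 (hc : 0 < c) {w : ℂ} (hw : 0 < w.im) :
    IntegrableOn (fun t : ℝ => ((t * Real.exp (-t) / (c + t)^2 : ℝ) : ℂ) / (w - (t:ℂ)))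
      (Ioi 0) := by
  refine Integrable.mono' ((integ_pow hc 2).const_mul (1 / w.im)) (cmeas3 w c) ?_
  filter_upwards [ae_restrict_mem measurableSet_Ioi] with t ht
  have ht' : (0:ℝ) < t := ht
  have hct : (0:ℝ) < c + t := by linarith
  have h0 : 0 ≤ t * Real.exp (-t) / (c + t)^2 := by positivity
  rw [norm_div, Complex.norm_real, Real.norm_eq_abs, abs_of_nonneg h0]
  rw [div_le_iff₀ (lt_of_lt_of_le hw (wsub_abs hw t))]
  calc t * Real.exp (-t) / (c + t)^2
      = 1 / w.im * (t * Real.exp (-t) / (c + t)^2) * w.im := by field_simp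
  _ ≤ 1 / w.im * (t * Real.exp (-t) / (c + t)^2) * ‖w - (t:ℂ)‖ := by
      apply mul_le_mul_of_nonneg_left (wsub_abs hw t) (by positivity)

lemma Hfun_diff (hα : 0 < α) (hc : 0 < c)
    (hceq : (∫ t in Set.Ioi (0:ℝ), t * Real.exp (-t) / (c + t)^2) = 1/α)
    {w : ℂ} (hw : 0 < w.im) :
    Hfun α w - Hfun α ((-c:ℝ):ℂ)
      = (α:ℂ) * (w + c)^2
        * ∫ t in Ioi (0:ℝ), ((t * Real.exp (-t) / (c + t)^2 : ℝ) : ℂ) / (w - (t:ℂ)) := by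
  have hsub : Hfun α w - Hfun α ((-c:ℝ):ℂ)
      = (w + c) + (α:ℂ) * ((∫ t in Ioi (0:ℝ), ((t * Real.exp (-t) : ℝ) : ℂ) / (w - (t:ℂ)))
        - ∫ t in Ioi (0:ℝ), ((t * Real.exp (-t) : ℝ) : ℂ) / (((-c:ℝ):ℂ) - (t:ℂ))) := by
    rw [Hfun, Hfun]
    push_cast
    ring
  have hKdiff : (∫ t in Ioi (0:ℝ), ((t * Real.exp (-t) : ℝ) : ℂ) / (w - (t:ℂ)))
      - (∫ t in Ioi (0:ℝ), ((t * Real.exp (-t) : ℝ) : ℂ) / (((-c:ℝ):ℂ) - (t:ℂ)))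
      = (w + c) * ∫ t in Ioi (0:ℝ),
          ((t * Real.exp (-t) : ℝ) : ℂ) / ((w - (t:ℂ)) * ((c:ℂ) + t)) := by
    rw [← integral_sub (cint1 hc hw) (cint_negc hc), ← MeasureTheory.integral_const_mul]
    apply setIntegral_congr_fun measurableSet_Ioi
    intro t ht
    have ht' : (0:ℝ) < t := ht
    have hct : ((c:ℂ) + t) ≠ 0 := by
      rw [show ((c:ℂ) + t) = ((c + t : ℝ):ℂ) by push_cast; ring]
      exact_mod_cast ne_of_gt (by linarith : (0:ℝ) < c + t)
    have hw' : w - (t:ℂ) ≠ 0 := wsub_ne hw t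
    have hnegc : ((-c:ℝ):ℂ) - (t:ℂ) = -((c:ℂ) + t) := by push_cast; ring
    show ((t * Real.exp (-t) : ℝ) : ℂ) / (w - (t:ℂ))
        - ((t * Real.exp (-t) : ℝ) : ℂ) / (((-c:ℝ):ℂ) - (t:ℂ))
      = (w + c) * (((t * Real.exp (-t) : ℝ) : ℂ) / ((w - (t:ℂ)) * ((c:ℂ) + t)))
    rw [hnegc, div_neg, sub_neg_eq_add]
    field_simp
    ring
  have hone : (1:ℂ) = (α:ℂ) * ∫ t in Ioi (0:ℝ), ((t * Real.exp (-t) / (c + t)^2 : ℝ) : ℂ) := by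
    have hcoe : (∫ t in Ioi (0:ℝ), ((t * Real.exp (-t) / (c + t)^2 : ℝ) : ℂ))
        = ((∫ t in Ioi (0:ℝ), t * Real.exp (-t) / (c + t)^2 : ℝ) : ℂ) := integral_ofReal
    rw [hcoe, hceq]
    push_cast
    rw [mul_one_div, div_self (by exact_mod_cast ne_of_gt hα : (α:ℂ) ≠ 0)]
  have hJint := cint3 hc (w := w) hw
  have hRint : IntegrableOn (fun t : ℝ => ((t * Real.exp (-t) / (c + t)^2 : ℝ) : ℂ))
      (Ioi 0) := by
    rw [show (fun t : ℝ => ((t * Real.exp (-t) / (c + t)^2 : ℝ) : ℂ))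
      = (fun t : ℝ => ((t * Real.exp (-t) / (c + t)^2 : ℝ) : ℂ)) from rfl]
    exact (integ_pow hc 2).ofReal
  have hMJ : (∫ t in Ioi (0:ℝ), ((t * Real.exp (-t) / (c + t)^2 : ℝ) : ℂ))
      + (∫ t in Ioi (0:ℝ), ((t * Real.exp (-t) : ℝ) : ℂ) / ((w - (t:ℂ)) * ((c:ℂ) + t)))
      = (w + c) * ∫ t in Ioi (0:ℝ),
          ((t * Real.exp (-t) / (c + t)^2 : ℝ) : ℂ) / (w - (t:ℂ)) := by
    rw [← integral_add hRint (cint2 hc hw), ← MeasureTheory.integral_const_mul]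
    apply setIntegral_congr_fun measurableSet_Ioi
    intro t ht
    have ht' : (0:ℝ) < t := ht
    have hct : ((c:ℂ) + t) ≠ 0 := by
      rw [show ((c:ℂ) + t) = ((c + t : ℝ):ℂ) by push_cast; ring]
      exact_mod_cast ne_of_gt (by linarith : (0:ℝ) < c + t)
    have hw' : w - (t:ℂ) ≠ 0 := wsub_ne hw t
    show ((t * Real.exp (-t) / (c + t)^2 : ℝ) : ℂ)
        + ((t * Real.exp (-t) : ℝ) : ℂ) / ((w - (t:ℂ)) * ((c:ℂ) + t))
      = (w + c) * (((t * Real.exp (-t) / (c + t)^2 : ℝ) : ℂ) / (w - (t:ℂ)))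
    push_cast
    field_simp
    ring
  rw [hsub, hKdiff]
  have expand : (w + c) + (α:ℂ) * ((w + c) * ∫ t in Ioi (0:ℝ),
      ((t * Real.exp (-t) : ℝ) : ℂ) / ((w - (t:ℂ)) * ((c:ℂ) + t)))
      = (w + c) * (1 + (α:ℂ) * ∫ t in Ioi (0:ℝ),
        ((t * Real.exp (-t) : ℝ) : ℂ) / ((w - (t:ℂ)) * ((c:ℂ) + t))) := by ring
  rw [expand]
  rw [hone]
  rw [show ((α:ℂ) * ∫ t in Ioi (0:ℝ), ((t * Real.exp (-t) / (c + t)^2 : ℝ) : ℂ))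
      + (α:ℂ) * (∫ t in Ioi (0:ℝ),
        ((t * Real.exp (-t) : ℝ) : ℂ) / ((w - (t:ℂ)) * ((c:ℂ) + t)))
      = (α:ℂ) * ((∫ t in Ioi (0:ℝ), ((t * Real.exp (-t) / (c + t)^2 : ℝ) : ℂ))
        + (∫ t in Ioi (0:ℝ),
          ((t * Real.exp (-t) : ℝ) : ℂ) / ((w - (t:ℂ)) * ((c:ℂ) + t)))) from by ring]
  rw [hMJ]
  ring
end cplx


section plimit
variable {α c : ℝ}

lemma z_tendsto {v : ℝ → ℝ}
    (hvt : Tendsto v (nhdsWithin (-c:ℝ) (Ioi (-c))) (nhds 0)) :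
    Tendsto (fun x : ℝ => (x : ℂ) + (v x : ℝ) * Complex.I)
      (nhdsWithin (-c) (Ioi (-c))) (nhds (((-c:ℝ):ℂ))) := by
  have h1 : Tendsto (fun x : ℝ => (x : ℂ)) (nhdsWithin (-c:ℝ) (Ioi (-c))) (nhds ((-c:ℝ):ℂ)) :=
    (Complex.continuous_ofReal.tendsto _).comp tendsto_x_self
  have h2 : Tendsto (fun x : ℝ => ((v x : ℝ) : ℂ)) (nhdsWithin (-c:ℝ) (Ioi (-c)))
      (nhds (((0:ℝ):ℂ))) := (Complex.continuous_ofReal.tendsto _).comp hvt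
  have h3 := h1.add (h2.mul_const Complex.I)
  have h4 : ((-c:ℝ):ℂ) + ((0:ℝ):ℂ) * Complex.I = ((-c:ℝ):ℂ) := by simp
  rwa [h4] at h3

lemma J_limit (hα : 0 < α) (hc : 0 < c) {v : ℝ → ℝ}
    (hvt : Tendsto v (nhdsWithin (-c:ℝ) (Ioi (-c))) (nhds 0)) :
    Tendsto (fun x : ℝ => ∫ t in Ioi (0:ℝ),
        ((t * Real.exp (-t) / (c + t)^2 : ℝ) : ℂ) / (((x : ℂ) + (v x : ℝ) * Complex.I) - (t:ℂ)))
      (nhdsWithin (-c) (Ioi (-c)))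
      (nhds (-((∫ t in Ioi (0:ℝ), t * Real.exp (-t) / (c+t)^3 : ℝ) : ℂ))) := by
  set l := nhdsWithin (-c:ℝ) (Ioi (-c)) with hl
  have hz := z_tendsto hvt
  have hball : (fun x : ℝ => (x:ℂ) + (v x : ℝ) * Complex.I) ⁻¹'
      (Metric.ball ((-c:ℝ):ℂ) (c/2)) ∈ l :=
    hz (Metric.ball_mem_nhds _ (by linarith))
  have key : Tendsto (fun x : ℝ => ∫ t in Ioi (0:ℝ),
      ((t * Real.exp (-t) / (c + t)^2 : ℝ) : ℂ) / (((x : ℂ) + (v x : ℝ) * Complex.I) - (t:ℂ))) l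
      (nhds (∫ t in Ioi (0:ℝ),
        ((t * Real.exp (-t) / (c + t)^2 : ℝ) : ℂ) / (((-c:ℝ):ℂ) - (t:ℂ)))) := by
    apply tendsto_integral_filter_of_dominated_convergence
      (bound := fun t => 2 * (t * Real.exp (-t) / (c+t)^3))
    · filter_upwards with x; exact cmeas3 _ c
    · filter_upwards [hball] with x hx
      filter_upwards [ae_restrict_mem measurableSet_Ioi] with t ht
      have ht' : (0:ℝ) < t := ht
      have hct : (0:ℝ) < c + t := by linarith
      have hlb := ball_lb hc hx ht'
      have h0 : 0 ≤ t * Real.exp (-t) / (c + t)^2 := by positivity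
      rw [norm_div, Complex.norm_real, Real.norm_eq_abs, abs_of_nonneg h0]
      rw [div_le_iff₀ (lt_of_lt_of_le (by positivity) hlb)]
      calc t * Real.exp (-t) / (c + t)^2
          = (2 * (t * Real.exp (-t) / (c+t)^3)) * ((c+t)/2) := by field_simp
      _ ≤ (2 * (t * Real.exp (-t) / (c+t)^3)) * ‖((x:ℂ) + (v x : ℝ) * Complex.I) - (t:ℂ)‖ := by
          apply mul_le_mul_of_nonneg_left hlb (by positivity)
    · exact (integ_pow hc 3).const_mul 2
    · filter_upwards [ae_restrict_mem measurableSet_Ioi] with t ht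
      have ht' : (0:ℝ) < t := ht
      have hne : ((-c:ℝ):ℂ) - (t:ℂ) ≠ 0 := by
        rw [show ((-c:ℝ):ℂ) - (t:ℂ) = ((-c - t : ℝ):ℂ) by push_cast; ring]
        exact_mod_cast ne_of_lt (by linarith : -c - t < 0)
      exact tendsto_const_nhds.div (hz.sub tendsto_const_nhds) hne
  have heq : (∫ t in Ioi (0:ℝ),
      ((t * Real.exp (-t) / (c + t)^2 : ℝ) : ℂ) / (((-c:ℝ):ℂ) - (t:ℂ)))
      = -((∫ t in Ioi (0:ℝ), t * Real.exp (-t) / (c+t)^3 : ℝ) : ℂ) := by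
    have hcoe : ((∫ t in Ioi (0:ℝ), t * Real.exp (-t) / (c+t)^3 : ℝ) : ℂ)
        = ∫ t in Ioi (0:ℝ), ((t * Real.exp (-t) / (c+t)^3 : ℝ) : ℂ) :=
      (integral_ofReal (𝕜 := ℂ)).symm
    rw [hcoe, ← integral_neg]
    apply setIntegral_congr_fun measurableSet_Ioi
    intro t ht
    have ht' : (0:ℝ) < t := ht
    have hct : (0:ℝ) < c + t := by linarith
    show ((t * Real.exp (-t) / (c + t)^2 : ℝ) : ℂ) / (((-c:ℝ):ℂ) - (t:ℂ))
      = -((t * Real.exp (-t) / (c+t)^3 : ℝ) : ℂ)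
    rw [show ((-c:ℝ):ℂ) - (t:ℂ) = -((c:ℂ) + t) by push_cast; ring, div_neg]
    push_cast
    rw [neg_inj, div_div, ← pow_succ]
  rwa [heq] at key
end plimit


lemma qident {a b : ℂ} (ha : a ≠ 0) :
    (a + b*Complex.I)^2 / a = a - b^2/a + 2*b*Complex.I := by
  have h1 : (a + b*Complex.I)^2 = a^2 - b^2 + 2*a*b*Complex.I := by
    linear_combination b^2 * Complex.I_sq
  rw [h1]
  field_simp

/-- with `γ_α = 6 H_α″(-c_α)/H_α‴(-c_α)` one has `γ_α > 0`,
`v_α(x) ∼ γ_α^{1/2}(x+c_α)^{1/2}` as `x ↓ -c_α`, and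
`(P_α(x) − s_α)/(x + c_α) → −(1/2) γ_α H_α″(-c_α) > 0` as `x ↓ -c_α`. -/
theorem free_gamma_behavior_at_left_endpoint
    (α : ℝ) (hα : 0 < α) (c : ℝ) (hc : 0 < c)
    (hceq : (∫ t in Set.Ioi (0:ℝ), t * Real.exp (-t) / (c + t)^2) = 1/α)
    (v : ℝ → ℝ) (hv0 : ∀ x ≤ -c, v x = 0)
    (hvpos : ∀ x, -c < x → 0 < v x)
    (hveq : ∀ x, -c < x → Fint x (v x) = 1/α)
    (hvuniq : ∀ x, -c < x → ∀ y, 0 < y → Fint x y = 1/α → y = v x)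
    (P : ℝ → ℝ)
    (hP : ∀ x : ℝ, ((P x : ℝ) : ℂ) = Hfun α ((x : ℂ) + (v x : ℝ) * Complex.I))
    (s : ℝ) (hs : s = P (-c))
    (γ : ℝ)
    (hγ : (γ : ℂ) = 6 * iteratedDeriv 2 (Hfun α) ((-c : ℝ) : ℂ)
        / iteratedDeriv 3 (Hfun α) ((-c : ℝ) : ℂ)) :
    0 < γ ∧
    Filter.Tendsto (fun x => v x / (Real.sqrt γ * Real.sqrt (x + c)))
      (nhdsWithin (-c) (Set.Ioi (-c))) (nhds 1) ∧
    Filter.Tendsto (fun x => (P x - s) / (x + c))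
      (nhdsWithin (-c) (Set.Ioi (-c)))
      (nhds (-(1/2) * γ * (iteratedDeriv 2 (Hfun α) ((-c : ℝ) : ℂ)).re)) ∧
    0 < -(1/2) * γ * (iteratedDeriv 2 (Hfun α) ((-c : ℝ) : ℂ)).re := by
  have hI3 := integ_pow_pos hc 3
  have hI4 := integ_pow_pos hc 4
  set I3 : ℝ := ∫ t in Ioi (0:ℝ), t * Real.exp (-t) / (c+t)^3 with hI3def
  set I4 : ℝ := ∫ t in Ioi (0:ℝ), t * Real.exp (-t) / (c+t)^4 with hI4def
  have hd2 : iteratedDeriv 2 (Hfun α) ((-c:ℝ):ℂ) = ((-(2*α*I3) : ℝ) : ℂ) := by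
    rw [iteratedDeriv2_Hfun hc α, Kker_at_neg_c hc 3]
    rw [hI3def]
    push_cast
    ring
  have hd3 : iteratedDeriv 3 (Hfun α) ((-c:ℝ):ℂ) = ((-(6*α*I4) : ℝ) : ℂ) := by
    rw [iteratedDeriv3_Hfun hc α, Kker_at_neg_c hc 4]
    rw [hI4def]
    push_cast
    ring
  have hα' : (α:ℂ) ≠ 0 := by exact_mod_cast ne_of_gt hα
  have hI4' : ((I4:ℝ):ℂ) ≠ 0 := by exact_mod_cast ne_of_gt hI4
  have hγval : γ = 2*I3/I4 := by
    have h := hγ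
    rw [hd2, hd3] at h
    have h2 : (γ:ℂ) = (((2*I3/I4 : ℝ)):ℂ) := by
      rw [h]
      push_cast
      field_simp
    exact_mod_cast h2
  have hγpos : 0 < γ := by rw [hγval]; positivity
  have hvt := v_tendsto_zero hα hc hceq hvpos hveq
  have hrat0 := ratio_limit hα hc hceq hvpos hveq
  have hrat : Tendsto (fun x => (v x)^2 / (x + c)) (nhdsWithin (-c) (Ioi (-c))) (nhds γ) := by
    rw [hγval]; exact hrat0
  refine ⟨hγpos, sqrt_ratio_limit hγpos hvpos hrat, ?_, ?_⟩
  · -- P limit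
    set l := nhdsWithin (-c:ℝ) (Ioi (-c)) with hl
    have hJ := J_limit hα hc hvt
    have hsP : ((s:ℝ):ℂ) = Hfun α ((-c:ℝ):ℂ) := by
      rw [hs, hP (-c)]
      congr 1
      rw [hv0 (-c) le_rfl]
      push_cast
      ring
    -- q limit
    have hhc : Tendsto (fun x : ℝ => ((x + c : ℝ):ℂ)) l (nhds (((0:ℝ):ℂ))) := by
      apply (Complex.continuous_ofReal.tendsto _).comp
      have := tendsto_x_self (c := c) |>.add (tendsto_const_nhds (x := c))
      rwa [show -c + c = (0:ℝ) by ring] at this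
    have hvc : Tendsto (fun x : ℝ => ((v x : ℝ):ℂ)) l (nhds (((0:ℝ):ℂ))) :=
      (Complex.continuous_ofReal.tendsto _).comp hvt
    have hbc : Tendsto (fun x : ℝ => (((v x)^2/(x + c) : ℝ):ℂ)) l (nhds ((γ:ℝ):ℂ)) :=
      (Complex.continuous_ofReal.tendsto _).comp hrat
    have hq0 : Tendsto (fun x : ℝ => ((x + c : ℝ):ℂ) - (((v x)^2/(x + c) : ℝ):ℂ)
        + 2 * ((v x : ℝ):ℂ) * Complex.I) l (nhds (-(γ:ℂ))) := by
      have := (hhc.sub hbc).add ((hvc.const_mul 2).mul_const Complex.I)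
      have he : ((0:ℝ):ℂ) - ((γ:ℝ):ℂ) + 2 * ((0:ℝ):ℂ) * Complex.I = -(γ:ℂ) := by
        push_cast; ring
      rwa [he] at this
    have hq : Tendsto (fun x : ℝ => (((x:ℂ) + (v x : ℝ) * Complex.I) + (c:ℂ))^2
        / ((x + c : ℝ):ℂ)) l (nhds (-(γ:ℂ))) := by
      apply hq0.congr'
      filter_upwards [self_mem_nhdsWithin] with x hx
      have hx' : -c < x := hx
      have hxc : (0:ℝ) < x + c := by linarith
      have hne : ((x + c : ℝ):ℂ) ≠ 0 := by exact_mod_cast ne_of_gt hxc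
      rw [show (x:ℂ) + ((v x : ℝ):ℂ) * Complex.I + (c:ℂ)
          = ((x + c : ℝ):ℂ) + ((v x : ℝ):ℂ) * Complex.I by push_cast; ring]
      rw [qident hne]
      congr 1
      congr 1
      push_cast
      ring
    -- combine
    have hfull : Tendsto (fun x : ℝ => ((α:ℂ)
        * ((((x:ℂ) + (v x : ℝ) * Complex.I) + (c:ℂ))^2 / ((x + c : ℝ):ℂ))
        * (∫ t in Ioi (0:ℝ), ((t * Real.exp (-t) / (c + t)^2 : ℝ) : ℂ)
            / (((x : ℂ) + (v x : ℝ) * Complex.I) - (t:ℂ)))).re) l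
        (nhds (((α:ℂ) * (-(γ:ℂ)) * (-((I3:ℝ):ℂ))).re)) := by
      apply (Complex.continuous_re.tendsto _).comp
      exact (tendsto_const_nhds.mul hq).mul hJ
    have hval : ((α:ℂ) * (-(γ:ℂ)) * (-((I3:ℝ):ℂ))).re = α * γ * I3 := by
      have : ((α:ℂ) * (-(γ:ℂ)) * (-((I3:ℝ):ℂ))) = (((α * γ * I3 : ℝ)):ℂ) := by
        push_cast; ring
      rw [this, Complex.ofReal_re]
    rw [hval] at hfull
    have htarget : -(1/2) * γ * (iteratedDeriv 2 (Hfun α) ((-c : ℝ) : ℂ)).re = α * γ * I3 := by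
      rw [hd2, Complex.ofReal_re]
      ring
    rw [htarget]
    apply hfull.congr'
    filter_upwards [self_mem_nhdsWithin] with x hx
    have hx' : -c < x := hx
    have hxc : (0:ℝ) < x + c := by linarith
    have hne : ((x + c : ℝ):ℂ) ≠ 0 := by exact_mod_cast ne_of_gt hxc
    have hzim : 0 < ((x:ℂ) + ((v x : ℝ):ℂ) * Complex.I).im := by
      simp only [Complex.add_im, Complex.ofReal_im, Complex.mul_im, Complex.I_re,
        Complex.I_im, Complex.ofReal_re, mul_zero, mul_one, zero_add]
      simpa using hvpos x hx'
    have hdiff := Hfun_diff hα hc hceq hzim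
    have hdiff2 : ((P x : ℝ):ℂ) - ((s:ℝ):ℂ)
        = (α:ℂ) * (((x:ℂ) + (v x : ℝ) * Complex.I) + (c:ℂ))^2
          * ∫ t in Ioi (0:ℝ), ((t * Real.exp (-t) / (c + t)^2 : ℝ) : ℂ)
              / (((x : ℂ) + (v x : ℝ) * Complex.I) - (t:ℂ)) := by
      rw [hP x, hsP, hdiff]
    have hre : ((α:ℂ)
        * ((((x:ℂ) + (v x : ℝ) * Complex.I) + (c:ℂ))^2 / ((x + c : ℝ):ℂ))
        * (∫ t in Ioi (0:ℝ), ((t * Real.exp (-t) / (c + t)^2 : ℝ) : ℂ)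
            / (((x : ℂ) + (v x : ℝ) * Complex.I) - (t:ℂ))))
        = (((P x - s)/(x + c) : ℝ) : ℂ) := by
      rw [show ((((P x - s)/(x + c) : ℝ)) : ℂ)
          = (((P x : ℝ):ℂ) - ((s:ℝ):ℂ)) / ((x + c : ℝ):ℂ) by push_cast; ring]
      rw [hdiff2]
      ring
    rw [hre, Complex.ofReal_re]
  · -- positivity of target
    rw [hd2, Complex.ofReal_re,
      show -(1/2) * γ * -(2*α*I3) = α * γ * I3 by ring]
    positivity
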